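/- The function Δ₆ has a first-order zero at s = 3/4 with expansion Δ₆(3/4 + δ) = (2(√π·Γ(1/4)·ζ(1/2) + Γ(3/4)·ζ(3/2))/(√π·Γ(1/4) + Γ(3/4)))·δ + O(δ²); precisely, the limit of Δ₆(3/4 + h)/h as h → 0 (h ≠ 0, h ∈ ℂ) equals 2(√π·Γ(1/4)·ζ(1/2) + Γ(3/4)·ζ(3/2))/(√π·Γ(1/4) + Γ(3/4)), where ζ denotes the Riemann zeta function. -/

import Mathlib

open Filter

noncomputable def D (s : ℂ) : ℂ :=
  ((Real.pi ^ (-(1/4) : ℝ) : ℝ) * Complex.Gamma s +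
    (Real.pi ^ ((1/4) : ℝ) : ℝ) * Complex.Gamma (s - 1/2)) / Complex.Gamma (s - 1/4)

noncomputable def Δ₆ (s : ℂ) : ℂ :=
  (completedRiemannZeta (2 * s) + completedRiemannZeta (2 * s - 1)) /
    (completedRiemannZeta (2 * s - 1/2) * D s)

lemma pos_ne_neg_nat {x : ℝ} (hx : 0 < x) (m : ℕ) : (x : ℂ) ≠ -m := by
  intro h
  have : x = -(m : ℝ) := by exact_mod_cast h
  have := Nat.cast_nonneg (α := ℝ) m
  linarith

theorem Delta6_zero_at_three_quarters :
    Tendsto (fun h : ℂ => Δ₆ (3/4 + h) / h) (nhdsWithin 0 {0}ᶜ)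
      (nhds (2 * ((Real.sqrt Real.pi : ℂ) * Complex.Gamma (1/4) * riemannZeta (1/2) +
          Complex.Gamma (3/4) * riemannZeta (3/2)) /
        ((Real.sqrt Real.pi : ℂ) * Complex.Gamma (1/4) + Complex.Gamma (3/4)))) := by
  have pi_pos := Real.pi_pos
  set a : ℝ := Real.pi ^ ((1/4) : ℝ) with ha_def
  have ha : 0 < a := Real.rpow_pos_of_pos pi_pos _
  have hA : (a : ℂ) ≠ 0 := by exact_mod_cast ha.ne'
  -- real rpow facts
  have hinv : (Real.pi ^ (-(1/4) : ℝ) : ℝ) = a⁻¹ := by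
    rw [Real.rpow_neg pi_pos.le]
  have hsqrt : Real.sqrt Real.pi = a * a := by
    rw [Real.sqrt_eq_rpow, ha_def, ← Real.rpow_add pi_pos]; norm_num
  have h34 : (Real.pi ^ (-(3/4) : ℝ) : ℝ) = (a * a * a)⁻¹ := by
    rw [Real.rpow_neg pi_pos.le]
    congr 1
    rw [show (3/4 : ℝ) = 1/4 + 1/4 + 1/4 by norm_num, Real.rpow_add pi_pos,
      Real.rpow_add pi_pos]
  -- Gamma values as positive reals
  have hg4 : Complex.Gamma (1/4) = ((Real.Gamma (1/4) : ℝ) : ℂ) := by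
    rw [show (1/4 : ℂ) = ((1/4 : ℝ) : ℂ) by norm_num, Complex.Gamma_ofReal]
  have hg34 : Complex.Gamma (3/4) = ((Real.Gamma (3/4) : ℝ) : ℂ) := by
    rw [show (3/4 : ℂ) = ((3/4 : ℝ) : ℂ) by norm_num, Complex.Gamma_ofReal]
  have hG4pos : 0 < Real.Gamma (1/4) := Real.Gamma_pos_of_pos (by norm_num)
  have hG34pos : 0 < Real.Gamma (3/4) := Real.Gamma_pos_of_pos (by norm_num)
  -- D at 3/4
  have hGhalf : Complex.Gamma (1/2) = ((Real.sqrt Real.pi : ℝ) : ℂ) := by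
    rw [Complex.Gamma_one_half_eq, Real.sqrt_eq_rpow, Complex.ofReal_cpow pi_pos.le]
    norm_num
  have hD : D (3/4) = (((a⁻¹ : ℝ) : ℂ) * Complex.Gamma (3/4) +
      ((a : ℝ) : ℂ) * Complex.Gamma (1/4)) / (((a : ℝ) : ℂ) * ((a : ℝ) : ℂ)) := by
    rw [D, show (3/4 : ℂ) - 1/2 = 1/4 by norm_num, show (3/4 : ℂ) - 1/4 = 1/2 by norm_num,
      hGhalf, hsqrt, hinv]
    push_cast
    ring_nf
    rw [← ha_def]
    ring
  have hDne : D (3/4) ≠ 0 := by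
    rw [hD]
    apply div_ne_zero
    · rw [hg4, hg34]
      have : ((a⁻¹ : ℝ) : ℂ) * ((Real.Gamma (3/4) : ℝ) : ℂ) +
          ((a : ℝ) : ℂ) * ((Real.Gamma (1/4) : ℝ) : ℂ) =
          (((a⁻¹ * Real.Gamma (3/4) + a * Real.Gamma (1/4) : ℝ)) : ℂ) := by push_cast; ring
      rw [this, Complex.ofReal_ne_zero]
      positivity
    · exact mul_ne_zero hA hA
  -- completed zeta values via riemannZeta
  have hGammaR : ∀ x : ℝ, 0 < x →
      completedRiemannZeta (x : ℂ) = Complex.Gammaℝ (x : ℂ) * riemannZeta (x : ℂ) := by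
    intro x hx
    have hx0 : (x : ℂ) ≠ 0 := by exact_mod_cast hx.ne'
    have hGne : Complex.Gammaℝ (x : ℂ) ≠ 0 := by
      rw [Ne, Complex.Gammaℝ_eq_zero_iff]
      rintro ⟨n, hn⟩
      have : x = -(2 * n : ℝ) := by exact_mod_cast hn
      have : (0:ℝ) ≤ 2 * n := by positivity
      linarith
    have := riemannZeta_def_of_ne_zero hx0
    rw [this, mul_div_assoc', mul_div_cancel_left₀ _ hGne]
  have hcpow : ∀ x : ℝ, (Real.pi : ℂ) ^ ((x : ℝ) : ℂ) = ((Real.pi ^ x : ℝ) : ℂ) := by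
    intro x; rw [Complex.ofReal_cpow pi_pos.le]
  have hΛhalf : completedRiemannZeta (1/2) = ((a⁻¹ : ℝ) : ℂ) * Complex.Gamma (1/4) *
      riemannZeta (1/2) := by
    have := hGammaR (1/2) (by norm_num)
    rw [show (((1/2 : ℝ)) : ℂ) = (1/2 : ℂ) by norm_num] at this
    rw [this, Complex.Gammaℝ_def, show -(1/2 : ℂ)/2 = ((-(1/4) : ℝ) : ℂ) by norm_num,
      hcpow, hinv, show (1/2 : ℂ)/2 = (1/4 : ℂ) by norm_num]
  have hΛ32 : completedRiemannZeta (3/2) = (((a * a * a)⁻¹ : ℝ) : ℂ) * Complex.Gamma (3/4) *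
      riemannZeta (3/2) := by
    have := hGammaR (3/2) (by norm_num)
    rw [show (((3/2 : ℝ)) : ℂ) = (3/2 : ℂ) by norm_num] at this
    rw [this, Complex.Gammaℝ_def, show -(3/2 : ℂ)/2 = ((-(3/4) : ℝ) : ℂ) by norm_num,
      hcpow, h34, show (3/2 : ℂ)/2 = (3/4 : ℂ) by norm_num]
  -- the three tendsto pieces
  have T1 : Tendsto (fun h : ℂ => completedRiemannZeta (3/2 + 2*h) +
      completedRiemannZeta (1/2 + 2*h)) (nhdsWithin 0 {0}ᶜ)
      (nhds (completedRiemannZeta (3/2) + completedRiemannZeta (1/2))) := by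
    have c1 : ContinuousAt (fun h : ℂ => completedRiemannZeta (3/2 + 2*h)) 0 := by
      apply ContinuousAt.comp (g := completedRiemannZeta)
      · apply DifferentiableAt.continuousAt (𝕜 := ℂ)
        apply differentiableAt_completedZeta <;> norm_num
      · fun_prop
    have c2 : ContinuousAt (fun h : ℂ => completedRiemannZeta (1/2 + 2*h)) 0 := by
      apply ContinuousAt.comp (g := completedRiemannZeta)
      · apply DifferentiableAt.continuousAt (𝕜 := ℂ)
        apply differentiableAt_completedZeta <;> norm_num
      · fun_prop
    have : Tendsto (fun h : ℂ => completedRiemannZeta (3/2 + 2*h) +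
        completedRiemannZeta (1/2 + 2*h)) (nhdsWithin 0 {0}ᶜ)
        (nhds (completedRiemannZeta (3/2 + 2*0) + completedRiemannZeta (1/2 + 2*0))) :=
      (c1.add c2).tendsto.mono_left nhdsWithin_le_nhds
    simpa using this
  have T2 : Tendsto (fun h : ℂ => h * completedRiemannZeta (1 + 2*h)) (nhdsWithin 0 {0}ᶜ)
      (nhds (1/2)) := by
    have key : ∀ h : ℂ, h ≠ 0 → h * completedRiemannZeta (1 + 2*h) =
        h * completedRiemannZeta₀ (1 + 2*h) - h * (1/(1 + 2*h)) + 1/2 := by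
      intro h hh
      rw [completedRiemannZeta_eq]
      have : (1 : ℂ) - (1 + 2*h) = -(2*h) := by ring
      rw [this]
      have h2 : (2 : ℂ) * h ≠ 0 := by
        simp [hh]
      field_simp
      ring
    have lim : Tendsto (fun h : ℂ => h * completedRiemannZeta₀ (1 + 2*h) -
        h * (1/(1 + 2*h)) + 1/2) (nhdsWithin 0 {0}ᶜ) (nhds (1/2)) := by
      have c1 : ContinuousAt (fun h : ℂ => h * completedRiemannZeta₀ (1 + 2*h) -
          h * (1/(1 + 2*h)) + 1/2) 0 := by
        apply ContinuousAt.add _ continuousAt_const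
        apply ContinuousAt.sub
        · exact continuousAt_id.mul
            ((differentiable_completedZeta₀.continuous.continuousAt).comp (by fun_prop))
        · apply continuousAt_id.mul
          apply ContinuousAt.div continuousAt_const (by fun_prop)
          norm_num
      have : Tendsto (fun h : ℂ => h * completedRiemannZeta₀ (1 + 2*h) -
          h * (1/(1 + 2*h)) + 1/2) (nhdsWithin 0 {0}ᶜ)
          (nhds (0 * completedRiemannZeta₀ (1 + 2*0) - 0 * (1/(1 + 2*0)) + 1/2)) :=
        c1.tendsto.mono_left nhdsWithin_le_nhds
      simpa using this
    refine lim.congr' ?_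
    filter_upwards [self_mem_nhdsWithin] with h hh
    exact (key h hh).symm
  have T3 : Tendsto (fun h : ℂ => D (3/4 + h)) (nhdsWithin 0 {0}ᶜ) (nhds (D (3/4))) := by
    have cD : ContinuousAt D (3/4) := by
      apply ContinuousAt.div
      · apply ContinuousAt.add
        · refine continuousAt_const.mul ?_
          rw [show (3/4 : ℂ) = ((3/4 : ℝ) : ℂ) by norm_num]
          exact (Complex.differentiableAt_Gamma _
            (pos_ne_neg_nat (by norm_num : (0:ℝ) < 3/4))).continuousAt
        · apply continuousAt_const.mul
          apply ContinuousAt.comp (g := Complex.Gamma)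
          · rw [show (3/4 : ℂ) - 1/2 = ((1/4 : ℝ) : ℂ) by norm_num]
            exact (Complex.differentiableAt_Gamma _
              (pos_ne_neg_nat (by norm_num : (0:ℝ) < 1/4))).continuousAt
          · fun_prop
      · apply ContinuousAt.comp (g := Complex.Gamma)
        · rw [show (3/4 : ℂ) - 1/4 = ((1/2 : ℝ) : ℂ) by norm_num]
          exact (Complex.differentiableAt_Gamma _
            (pos_ne_neg_nat (by norm_num : (0:ℝ) < 1/2))).continuousAt
        · fun_prop
      · rw [show (3/4 : ℂ) - 1/4 = 1/2 by norm_num, hGhalf, Complex.ofReal_ne_zero]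
        positivity
    have cD' : ContinuousAt (fun h : ℂ => D (3/4 + h)) 0 := by
      apply ContinuousAt.comp (g := D)
      · simpa using cD
      · fun_prop
    have : Tendsto (fun h : ℂ => D (3/4 + h)) (nhdsWithin 0 {0}ᶜ)
        (nhds (D (3/4 + 0))) := cD'.tendsto.mono_left nhdsWithin_le_nhds
    simpa using this
  -- combine
  have hden_ne : (1/2 : ℂ) * D (3/4) ≠ 0 := mul_ne_zero (by norm_num) hDne
  have Tmain : Tendsto (fun h : ℂ =>
      (completedRiemannZeta (3/2 + 2*h) + completedRiemannZeta (1/2 + 2*h)) /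
        ((h * completedRiemannZeta (1 + 2*h)) * D (3/4 + h))) (nhdsWithin 0 {0}ᶜ)
      (nhds ((completedRiemannZeta (3/2) + completedRiemannZeta (1/2)) /
        ((1/2 : ℂ) * D (3/4)))) :=
    T1.div (T2.mul T3) hden_ne
  have heq : ∀ h : ℂ, h ≠ 0 → Δ₆ (3/4 + h) / h =
      (completedRiemannZeta (3/2 + 2*h) + completedRiemannZeta (1/2 + 2*h)) /
        ((h * completedRiemannZeta (1 + 2*h)) * D (3/4 + h)) := by
    intro h hh
    rw [Δ₆, show 2 * (3/4 + h) = 3/2 + 2*h by ring,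
      show (3/2 : ℂ) + 2*h - 1 = 1/2 + 2*h by ring,
      show (3/2 : ℂ) + 2*h - 1/2 = 1 + 2*h by ring, div_div]
    congr 1
    ring
  have Tfinal : Tendsto (fun h : ℂ => Δ₆ (3/4 + h) / h) (nhdsWithin 0 {0}ᶜ)
      (nhds ((completedRiemannZeta (3/2) + completedRiemannZeta (1/2)) /
        ((1/2 : ℂ) * D (3/4)))) := by
    refine Tmain.congr' ?_
    filter_upwards [self_mem_nhdsWithin] with h hh
    exact (heq h hh).symm
  -- identify the limit value
  have htden : (Real.sqrt Real.pi : ℂ) * Complex.Gamma (1/4) + Complex.Gamma (3/4) ≠ 0 := by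
    rw [hsqrt, hg4, hg34]
    have : (((a * a : ℝ)) : ℂ) * ((Real.Gamma (1/4) : ℝ) : ℂ) + ((Real.Gamma (3/4) : ℝ) : ℂ) =
        ((a * a * Real.Gamma (1/4) + Real.Gamma (3/4) : ℝ) : ℂ) := by push_cast; ring
    rw [this, Complex.ofReal_ne_zero]
    positivity
  have hval : (completedRiemannZeta (3/2) + completedRiemannZeta (1/2)) /
      ((1/2 : ℂ) * D (3/4)) =
      2 * ((Real.sqrt Real.pi : ℂ) * Complex.Gamma (1/4) * riemannZeta (1/2) +
          Complex.Gamma (3/4) * riemannZeta (3/2)) /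
        ((Real.sqrt Real.pi : ℂ) * Complex.Gamma (1/4) + Complex.Gamma (3/4)) := by
    rw [div_eq_div_iff hden_ne htden, hΛhalf, hΛ32, hD, hsqrt]
    simp only [Complex.ofReal_inv, Complex.ofReal_mul]
    field_simp
    ring
  rw [← hval]
  exact Tfinal
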